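/- Let d, q > 0 and r₁, r₂, r₃ ≥ 0 with r₁ > r₂. Let A be the 3×3 matrix with rows [−d−q+r₁, 0, d], [0, −d−q+r₂, d], [d+q, d+q, −2d+r₃], and B the 2×2 matrix with rows [−d−q+r₂, 2d], [d+q, −2d+r₃]. Then s(A) > s(B). -/
import Mathlib


open Matrix

lemma memSpectrumIffDet {n : ℕ} (M : Matrix (Fin n) (Fin n) ℂ) (z : ℂ) :
    z ∈ spectrum ℂ M ↔ ((Matrix.diagonal fun _ => z) - M).det = 0 := by
  rw [spectrum.mem_iff, Matrix.isUnit_iff_isUnit_det, isUnit_iff_ne_zero, not_not,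
    Matrix.algebraMap_eq_diagonal]
  rfl

lemma bddSpec {n : ℕ} (M : Matrix (Fin n) (Fin n) ℂ) :
    BddAbove {t : ℝ | ∃ μ ∈ spectrum ℂ M, μ.re = t} := by
  letI := Matrix.linftyOpNormedRing (α := ℂ) (n := Fin n)
  letI := Matrix.linftyOpNormedAlgebra (R := ℂ) (α := ℂ) (n := Fin n)
  haveI : CompleteSpace (Matrix (Fin n) (Fin n) ℂ) := FiniteDimensional.complete ℂ _
  refine ⟨‖M‖ * ‖(1 : Matrix (Fin n) (Fin n) ℂ)‖, ?_⟩
  rintro t ⟨μ, hμ, rfl⟩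
  exact (Complex.re_le_norm μ).trans (spectrum.norm_le_norm_mul_of_mem hμ)


lemma cubicPosAux (t1 t2 t3 p M : ℝ) (hp : 0 < p) (hM2 : 2 ≤ M)
    (hc1 : |t1| ≤ M - 2 - p) (hc2 : |t2| ≤ M - 2 - p) (hc3 : |t3| ≤ M - 2 - p)
    (hpM : p ≤ M - 2) :
    0 < (3 * M - t1) * ((3 * M - t2) * (3 * M - t3) - p) - p * (3 * M - t2) := by
  have ha1 := le_abs_self t1
  have ha2 := le_abs_self t2
  have ha3 := le_abs_self t3
  have hb1 := neg_abs_le t1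
  have hb2 := neg_abs_le t2
  have hb3 := neg_abs_le t3
  have h1 : 2 * M ≤ 3 * M - t1 := by linarith
  have h2 : 2 * M ≤ 3 * M - t2 := by linarith
  have h3 : 2 * M ≤ 3 * M - t3 := by linarith
  have h4 : 3 * M - t2 ≤ 4 * M := by linarith
  have hin : (2 * M) * (2 * M) ≤ (3 * M - t2) * (3 * M - t3) :=
    mul_le_mul h2 h3 (by linarith) (by linarith)
  have hinner : 3 * M ^ 2 ≤ (3 * M - t2) * (3 * M - t3) - p := by
    nlinarith [sq_nonneg (M - 1)]
  have houter : (2 * M) * (3 * M ^ 2) ≤ (3 * M - t1) * ((3 * M - t2) * (3 * M - t3) - p) :=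
    mul_le_mul h1 hinner (by positivity) (by linarith)
  have hlast : p * (3 * M - t2) ≤ M * (4 * M) :=
    mul_le_mul (by linarith) h4 (by linarith) (by linarith)
  have hpos : 4 * M ^ 2 < 6 * M ^ 3 := by nlinarith [sq_nonneg M]
  nlinarith

/-- Spectral bound: maximum real part of the (complex) eigenvalues. -/
noncomputable def specBound {n : ℕ} (M : Matrix (Fin n) (Fin n) ℝ) : ℝ :=
  sSup {t : ℝ | ∃ μ ∈ spectrum ℂ (M.map Complex.ofReal), μ.re = t}

set_option maxHeartbeats 1000000 in
/-- Comparison of spectral bounds of the tributary matrix A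
and its limiting matrix B. -/
theorem specBound_tributary_gt (d q r₁ r₂ r₃ : ℝ) (hd : 0 < d) (hq : 0 < q)
    (hr₁ : 0 ≤ r₁) (hr₂ : 0 ≤ r₂) (hr₃ : 0 ≤ r₃) (hlt : r₂ < r₁) :
    specBound !![-d - q + r₂, 2 * d; d + q, -2 * d + r₃] <
      specBound !![-d - q + r₁, 0, d;
                   0, -d - q + r₂, d;
                   d + q, d + q, -2 * d + r₃] := by
  set t1 : ℝ := -d - q + r₁ with ht1
  set t2 : ℝ := -d - q + r₂ with ht2
  set t3 : ℝ := -2 * d + r₃ with ht3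
  set p : ℝ := d * (d + q) with hpdef
  have hp : 0 < p := mul_pos hd (by linarith)
  -- spectrum characterizations
  have charB : ∀ z : ℂ, z ∈ spectrum ℂ
      ((!![-d - q + r₂, 2 * d; d + q, -2 * d + r₃]).map Complex.ofReal) ↔
      (z - (t2 : ℂ)) * (z - (t3 : ℂ)) - 2 * (p : ℂ) = 0 := by
    intro z
    have hdet : ((Matrix.diagonal fun _ => z) -
          (!![-d - q + r₂, 2 * d; d + q, -2 * d + r₃]).map Complex.ofReal).det
        = (z - (t2 : ℂ)) * (z - (t3 : ℂ)) - 2 * (p : ℂ) := by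
      simp [Matrix.det_fin_two, Matrix.diagonal_apply, ht2, ht3, hpdef]
      push_cast; ring
    rw [memSpectrumIffDet, hdet]
  have charA : ∀ z : ℂ, z ∈ spectrum ℂ
      ((!![-d - q + r₁, 0, d; 0, -d - q + r₂, d;
           d + q, d + q, -2 * d + r₃]).map Complex.ofReal) ↔
      (z - (t1 : ℂ)) * ((z - (t2 : ℂ)) * (z - (t3 : ℂ)) - (p : ℂ))
        - (p : ℂ) * (z - (t2 : ℂ)) = 0 := by
    intro z
    have hdet : ((Matrix.diagonal fun _ => z) -
          (!![-d - q + r₁, 0, d; 0, -d - q + r₂, d;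
              d + q, d + q, -2 * d + r₃]).map Complex.ofReal).det
        = (z - (t1 : ℂ)) * ((z - (t2 : ℂ)) * (z - (t3 : ℂ)) - (p : ℂ))
          - (p : ℂ) * (z - (t2 : ℂ)) := by
      simp [Matrix.det_fin_three, Matrix.diagonal_apply, ht1, ht2, ht3, hpdef]
      push_cast; ring
    rw [memSpectrumIffDet, hdet]
  -- the top eigenvalue of B
  have hD : (0:ℝ) ≤ (t2 - t3) ^ 2 + 8 * p := by positivity
  obtain ⟨s, hs0, hs⟩ : ∃ s : ℝ, 0 ≤ s ∧ s ^ 2 = (t2 - t3) ^ 2 + 8 * p :=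
    ⟨Real.sqrt _, Real.sqrt_nonneg _, Real.sq_sqrt hD⟩
  have hroot : ((t2 + t3 + s) / 2 - t2) * ((t2 + t3 + s) / 2 - t3) = 2 * p := by
    nlinarith [hs]
  have hsC := congrArg (Complex.ofReal) hs
  push_cast at hsC
  -- μ is an eigenvalue of B
  have hμmem : (((t2 + t3 + s) / 2 : ℝ) : ℂ) ∈ spectrum ℂ
      ((!![-d - q + r₂, 2 * d; d + q, -2 * d + r₃]).map Complex.ofReal) := by
    rw [charB]
    have h0 : ((t2 + t3 + s) / 2 - t2) * ((t2 + t3 + s) / 2 - t3) - 2 * p = 0 := by linarith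
    have := congrArg (Complex.ofReal) h0
    push_cast at this ⊢
    linear_combination this
  -- every eigenvalue of B has real part ≤ μ
  have hub : ∀ t ∈ {t : ℝ | ∃ z ∈ spectrum ℂ
      ((!![-d - q + r₂, 2 * d; d + q, -2 * d + r₃]).map Complex.ofReal), z.re = t},
      t ≤ (t2 + t3 + s) / 2 := by
    rintro t ⟨z, hz, rfl⟩
    rw [charB] at hz
    have hfac : (z - (((t2 + t3 + s) / 2 : ℝ) : ℂ)) * (z - (((t2 + t3 - s) / 2 : ℝ) : ℂ)) = 0 := by
      push_cast
      linear_combination hz - hsC / 4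
    rcases mul_eq_zero.mp hfac with h | h
    · have hze : z = (((t2 + t3 + s) / 2 : ℝ) : ℂ) := by linear_combination h
      rw [hze, Complex.ofReal_re]
    · have hze : z = (((t2 + t3 - s) / 2 : ℝ) : ℂ) := by linear_combination h
      rw [hze, Complex.ofReal_re]
      linarith
  have hBle : specBound !![-d - q + r₂, 2 * d; d + q, -2 * d + r₃] ≤ (t2 + t3 + s) / 2 := by
    unfold specBound
    exact csSup_le ⟨(t2 + t3 + s) / 2, ⟨_, hμmem, Complex.ofReal_re _⟩⟩ hub
  -- the cubic of A
  have hfμneg : ((t2 + t3 + s) / 2 - t1) * (((t2 + t3 + s) / 2 - t2) * ((t2 + t3 + s) / 2 - t3) - p)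
      - p * ((t2 + t3 + s) / 2 - t2) < 0 := by
    have : ((t2 + t3 + s) / 2 - t1) * (((t2 + t3 + s) / 2 - t2) * ((t2 + t3 + s) / 2 - t3) - p)
        - p * ((t2 + t3 + s) / 2 - t2) = p * (r₂ - r₁) := by
      rw [ht1, ht2]
      linear_combination ((t2 + t3 + s) / 2 - t1) * hroot
    rw [this]
    nlinarith
  -- a point where the cubic is positive
  set M : ℝ := 2 + |t1| + |t2| + |t3| + p with hMdef
  have hM2 : 2 ≤ M := by
    have := abs_nonneg t1; have := abs_nonneg t2; have := abs_nonneg t3; linarith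
  have ha1 := le_abs_self t1
  have ha2 := le_abs_self t2
  have ha3 := le_abs_self t3
  have hb1 := neg_abs_le t1
  have hb2 := neg_abs_le t2
  have hb3 := neg_abs_le t3
  have hc1 : |t1| ≤ M - 2 - p := by rw [hMdef]; have := abs_nonneg t2; have := abs_nonneg t3; linarith
  have hc2 : |t2| ≤ M - 2 - p := by rw [hMdef]; have := abs_nonneg t1; have := abs_nonneg t3; linarith
  have hc3 : |t3| ≤ M - 2 - p := by rw [hMdef]; have := abs_nonneg t1; have := abs_nonneg t2; linarith
  have hpM : p ≤ M - 2 := by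
    rw [hMdef]; have := abs_nonneg t1; have := abs_nonneg t2; have := abs_nonneg t3; linarith
  have hsle : s ≤ M + 4 := by
    have habs : |t2 - t3| ≤ M - 2 := by
      have := abs_sub t2 t3
      linarith [abs_nonneg t1, hp]
    have h1 : (t2 - t3) ^ 2 ≤ (M - 2) ^ 2 := by
      rw [← sq_abs (t2 - t3)]
      exact pow_le_pow_left₀ (abs_nonneg _) habs 2
    have h2 : (t2 - t3) ^ 2 + 8 * p ≤ (M + 4) ^ 2 := by nlinarith
    nlinarith [hs, hs0, hM2]
  have hμT : (t2 + t3 + s) / 2 ≤ 3 * M := by linarith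
  have hfT := cubicPosAux t1 t2 t3 p M hp hM2 hc1 hc2 hc3 hpM
  -- intermediate value theorem
  have hc : ContinuousOn (fun x : ℝ => (x - t1) * ((x - t2) * (x - t3) - p) - p * (x - t2))
      (Set.Icc ((t2 + t3 + s) / 2) (3 * M)) := by fun_prop
  obtain ⟨lam, hlamIcc, hflam⟩ := intermediate_value_Icc hμT hc ⟨hfμneg.le, hfT.le⟩
  simp only at hflam
  have hlamgt : (t2 + t3 + s) / 2 < lam := by
    rcases lt_or_eq_of_le hlamIcc.1 with h | h
    · exact h
    · exfalso; rw [← h] at hflam; linarith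
  -- lam is an eigenvalue of A
  have hlammem : (lam : ℂ) ∈ spectrum ℂ
      ((!![-d - q + r₁, 0, d; 0, -d - q + r₂, d;
           d + q, d + q, -2 * d + r₃]).map Complex.ofReal) := by
    rw [charA]
    have := congrArg (Complex.ofReal) hflam
    push_cast at this
    linear_combination this
  have hAge : lam ≤ specBound !![-d - q + r₁, 0, d; 0, -d - q + r₂, d;
      d + q, d + q, -2 * d + r₃] := by
    unfold specBound
    exact le_csSup (bddSpec _) ⟨(lam : ℂ), hlammem, Complex.ofReal_re _⟩
  linarith
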